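/- arXiv:1911.01696 — 6 statements merged into one kernel-verified Lean document; each statement's English description precedes it below -/
import Mathlib

section
/- Gauge invariance of the Weylian affine connection: let U ⊆ ℝⁿ be open, g : U → Matrix (Fin n) (Fin n) ℝ with symmetric invertible values and differentiable at x ∈ U, φ a 1-form on U, and Ω : U → ℝ positive on U and differentiable at x. Define the gauge-transformed pair g̃ = Ω² g and φ̃_ν = φ_ν − Ω⁻¹ ∂_ν Ω. Then for all μ, ν, λ: Γ(g̃, φ̃)^μ_{νλ}(x) = Γ(g, φ)^μ_{νλ}(x); i.e. the Weylian affine connection is invariant under gauge transformations. -/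
open scoped BigOperators
open Matrix

noncomputable section

/-- Euclidean space ℝⁿ. -/
abbrev Euc (n : ℕ) := EuclideanSpace ℝ (Fin n)

/-- Partial derivative of `h` at `x` in the `μ`-th coordinate direction. -/
def pd {n : ℕ} (h : Euc n → ℝ) (μ : Fin n) (x : Euc n) : ℝ :=
  fderiv ℝ h x (EuclideanSpace.single μ 1)

/-- Kronecker delta. -/
def kron {n : ℕ} (i j : Fin n) : ℝ := if i = j then 1 else 0

/-- Levi-Civita Christoffel symbols Γ(g)^μ_{νλ}
    = ½ Σ_α g^{μα} (∂_ν g_{λα} + ∂_λ g_{αν} − ∂_α g_{νλ}). -/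
def christoffel {n : ℕ} (g : Euc n → Matrix (Fin n) (Fin n) ℝ)
    (μ ν l : Fin n) (x : Euc n) : ℝ :=
  (1 / 2) * ∑ α, (g x)⁻¹ μ α *
    (pd (fun y => g y l α) ν x + pd (fun y => g y α ν) l x - pd (fun y => g y ν l) α x)

/-- The Weylian affine connection Γ(g,φ)^μ_{νλ}
    = Γ(g)^μ_{νλ} + δ^μ_ν φ_λ + δ^μ_λ φ_ν − g_{νλ} φ^μ. -/
def weylConn {n : ℕ} (g : Euc n → Matrix (Fin n) (Fin n) ℝ)
    (φ : Fin n → Euc n → ℝ) (μ ν l : Fin n) (x : Euc n) : ℝ :=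
  christoffel g μ ν l x + kron μ ν * φ l x + kron μ l * φ ν x
    - g x ν l * ∑ α, (g x)⁻¹ μ α * φ α x

/-- Gauge invariance of the Weylian affine connection:
Γ(Ω²g, φ − dΩ/Ω) = Γ(g, φ). -/
theorem weylConn_gauge_invariant (n : ℕ)
    (U : Set (Euc n)) (hU : IsOpen U) (x : Euc n) (hx : x ∈ U)
    (g : Euc n → Matrix (Fin n) (Fin n) ℝ)
    (hgsym : ∀ y ∈ U, (g y)ᵀ = g y) (hginv : ∀ y ∈ U, IsUnit (g y))
    (hgdiff : ∀ μ ν : Fin n, DifferentiableAt ℝ (fun y => g y μ ν) x)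
    (φ : Fin n → Euc n → ℝ)
    (Ω : Euc n → ℝ) (hΩpos : ∀ y ∈ U, 0 < Ω y) (hΩdiff : DifferentiableAt ℝ Ω x) :
    ∀ μ ν l : Fin n,
      weylConn (fun y => (Ω y) ^ 2 • g y)
        (fun κ y => φ κ y - (Ω y)⁻¹ * pd Ω κ y) μ ν l x
      = weylConn g φ μ ν l x := by
  intro μ ν l
  have hO : Ω x ≠ 0 := (hΩpos x hx).ne'
  have hO2 : (Ω x) ^ 2 ≠ 0 := pow_ne_zero _ hO
  have hdet : IsUnit (g x).det := (Matrix.isUnit_iff_isUnit_det _).mp (hginv x hx)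
  -- inverse of the scaled metric
  have hinv : ((Ω x) ^ 2 • g x)⁻¹ = ((Ω x) ^ 2)⁻¹ • (g x)⁻¹ := by
    apply Matrix.inv_eq_right_inv
    rw [smul_mul_assoc, mul_smul_comm, Matrix.mul_nonsing_inv _ hdet, smul_smul,
      mul_inv_cancel₀ hO2, one_smul]
  -- symmetry at x
  have hsym : ∀ a b, g x b a = g x a b := fun a b => congrFun (congrFun (hgsym x hx) a) b
  -- inverse contraction
  have hmul : ∀ a b, (∑ α, (g x)⁻¹ a α * g x α b) = kron a b := by
    intro a b
    have h1 : (∑ α, (g x)⁻¹ a α * g x α b) = ((g x)⁻¹ * g x) a b := by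
      rw [Matrix.mul_apply]
    rw [h1, Matrix.nonsing_inv_mul _ hdet, Matrix.one_apply, kron]
  -- derivative of scaled entries
  have hpd : ∀ (a b κ : Fin n), pd (fun y => (Ω y) ^ 2 * g y a b) κ x
      = 2 * Ω x * pd Ω κ x * g x a b + (Ω x) ^ 2 * pd (fun y => g y a b) κ x := by
    intro a b κ
    have h1 : (fun y => (Ω y) ^ 2 * g y a b) = fun y => Ω y * (Ω y * g y a b) := by
      funext y; ring
    rw [h1]
    unfold pd
    rw [fderiv_fun_mul hΩdiff (hΩdiff.fun_mul (hgdiff a b)), fderiv_fun_mul hΩdiff (hgdiff a b)]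
    simp only [ContinuousLinearMap.add_apply, ContinuousLinearMap.smul_apply,
      smul_eq_mul]
    ring
  simp only [weylConn, christoffel, hinv, Matrix.smul_apply, smul_eq_mul, hpd]
  have key1 : (∑ α : Fin n, (Ω x ^ 2)⁻¹ * (g x)⁻¹ μ α *
        (2 * Ω x * pd Ω ν x * g x l α + Ω x ^ 2 * pd (fun y => g y l α) ν x +
            (2 * Ω x * pd Ω l x * g x α ν + Ω x ^ 2 * pd (fun y => g y α ν) l x) -
          (2 * Ω x * pd Ω α x * g x ν l + Ω x ^ 2 * pd (fun y => g y ν l) α x)))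
      = (∑ α : Fin n, (g x)⁻¹ μ α *
          (pd (fun y => g y l α) ν x + pd (fun y => g y α ν) l x - pd (fun y => g y ν l) α x))
        + 2 * (Ω x)⁻¹ * pd Ω ν x * kron μ l + 2 * (Ω x)⁻¹ * pd Ω l x * kron μ ν
        - 2 * (Ω x)⁻¹ * g x ν l * ∑ α : Fin n, (g x)⁻¹ μ α * pd Ω α x := by
    rw [← hmul μ l, ← hmul μ ν, Finset.mul_sum, Finset.mul_sum, Finset.mul_sum,
      ← Finset.sum_add_distrib, ← Finset.sum_add_distrib, ← Finset.sum_sub_distrib]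
    refine Finset.sum_congr rfl fun α _ => ?_
    rw [← hsym l α]
    field_simp
    ring
  have key2 : (∑ α : Fin n, (Ω x ^ 2)⁻¹ * (g x)⁻¹ μ α * (φ α x - (Ω x)⁻¹ * pd Ω α x))
      = (Ω x ^ 2)⁻¹ * (∑ α : Fin n, (g x)⁻¹ μ α * φ α x)
        - (Ω x ^ 2)⁻¹ * (Ω x)⁻¹ * (∑ α : Fin n, (g x)⁻¹ μ α * pd Ω α x) := by
    rw [Finset.mul_sum, Finset.mul_sum, ← Finset.sum_sub_distrib]
    exact Finset.sum_congr rfl fun α _ => by ring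
  rw [key1, key2]
  field_simp
  ring
end
end

section
/- Algebraic core of Weyl's 1921 theorem: let n ≥ 2, let g be a symmetric invertible real n×n matrix and φ, φ' : Fin n → ℝ two covectors. If there exists ψ : Fin n → ℝ such that for all μ, ν, λ the difference of the scale-connection terms has projective form, Γ(φ)^μ_{νλ} − Γ(φ')^μ_{νλ} = δ^μ_ν ψ_λ + δ^μ_λ ψ_ν, then φ = φ'. (Two Weylian metrics with the same Riemannian component in some gauge and projectively equivalent affine connections are identical.) -/
open scoped BigOperators
open Matrix

noncomputable section

/-- Scale-connection term Γ(φ)^μ_{νλ} = δ^μ_ν φ_λ + δ^μ_λ φ_ν − g_{νλ} φ^μ,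
with φ^μ = Σ_α (g⁻¹)^{μα} φ_α. -/
def scaleConnTerm {n : ℕ} (g : Matrix (Fin n) (Fin n) ℝ) (φ : Fin n → ℝ)
    (μ ν l : Fin n) : ℝ :=
  kron μ ν * φ l + kron μ l * φ ν - g ν l * ∑ α, g⁻¹ μ α * φ α

theorem weyl_aux_core (n : ℕ) (hn : 2 ≤ n) (g : Matrix (Fin n) (Fin n) ℝ)
    (hsym : gᵀ = g) (hinv : IsUnit g) (θ ψ : Fin n → ℝ)
    (key : ∀ μ ν l : Fin n,
      kron μ ν * θ l + kron μ l * θ ν - g ν l * ∑ α, g⁻¹ μ α * θ α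
        = kron μ ν * ψ l + kron μ l * ψ ν) :
    θ = 0 := by
  have hdet : IsUnit g.det := (Matrix.isUnit_iff_isUnit_det g).mp hinv
  have hig : g⁻¹ * g = 1 := Matrix.nonsing_inv_mul g hdet
  have hgi : g * g⁻¹ = 1 := Matrix.mul_nonsing_inv g hdet
  have hg' : ∀ a b, g a b = g b a := by
    intro a b
    rw [← Matrix.transpose_apply g b a, hsym]
  have hsyi : g⁻¹ᵀ = g⁻¹ := by
    rw [Matrix.transpose_nonsing_inv, hsym]
  have hgi' : ∀ a b, g⁻¹ a b = g⁻¹ b a := by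
    intro a b
    rw [← Matrix.transpose_apply g⁻¹ b a, hsyi]
  -- contraction identity: ∑ μ, g μ l * (g⁻¹ *ᵥ θ) μ = θ l
  have hgT : ∀ (v : Fin n → ℝ) (l : Fin n),
      ∑ μ, g μ l * ∑ α, g⁻¹ μ α * v α = v l := by
    intro v l
    have step1 : ∀ μ, g μ l * ∑ α, g⁻¹ μ α * v α
        = ∑ α, g l μ * g⁻¹ μ α * v α := by
      intro μ
      rw [Finset.mul_sum, hg' μ l]
      exact Finset.sum_congr rfl fun α _ => by ring
    calc ∑ μ, g μ l * ∑ α, g⁻¹ μ α * v α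
        = ∑ μ, ∑ α, g l μ * g⁻¹ μ α * v α :=
          Finset.sum_congr rfl fun μ _ => step1 μ
      _ = ∑ α, ∑ μ, g l μ * g⁻¹ μ α * v α := Finset.sum_comm
      _ = ∑ α, (∑ μ, g l μ * g⁻¹ μ α) * v α := by
          exact Finset.sum_congr rfl fun α _ => by rw [Finset.sum_mul]
      _ = ∑ α, (g * g⁻¹) l α * v α := by
          exact Finset.sum_congr rfl fun α _ => by rw [Matrix.mul_apply]
      _ = v l := by rw [hgi]; simp [Matrix.one_apply]
  -- first contraction: n θ = (n+1) ψ
  have c1 : ∀ l, (n : ℝ) * θ l = ((n : ℝ) + 1) * ψ l := by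
    intro l
    have e : ∑ μ, (kron μ μ * θ l + kron μ l * θ μ - g μ l * ∑ α, g⁻¹ μ α * θ α)
        = ∑ μ, (kron μ μ * ψ l + kron μ l * ψ μ) :=
      Finset.sum_congr rfl fun μ _ => key μ μ l
    rw [Finset.sum_sub_distrib, Finset.sum_add_distrib, Finset.sum_add_distrib,
      hgT θ l] at e
    have e1 : ∑ μ : Fin n, kron μ μ * θ l = (n : ℝ) * θ l := by
      simp [kron]
    have e2 : ∑ μ : Fin n, kron μ l * θ μ = θ l := by
      simp [kron]
    have e3 : ∑ μ : Fin n, kron μ μ * ψ l = (n : ℝ) * ψ l := by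
      simp [kron]
    have e4 : ∑ μ : Fin n, kron μ l * ψ μ = ψ l := by
      simp [kron]
    rw [e1, e2, e3, e4] at e
    linarith
  -- trace of g⁻¹ against g is n
  have htr : ∑ ν : Fin n, ∑ l : Fin n, g⁻¹ ν l * g ν l = (n : ℝ) := by
    calc ∑ ν : Fin n, ∑ l, g⁻¹ ν l * g ν l
        = ∑ ν : Fin n, ∑ l, g⁻¹ ν l * g l ν :=
          Finset.sum_congr rfl fun ν _ => Finset.sum_congr rfl fun l _ => by
            rw [hg' ν l]
      _ = ∑ ν : Fin n, (g⁻¹ * g) ν ν :=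
          Finset.sum_congr rfl fun ν _ => (Matrix.mul_apply).symm
      _ = (n : ℝ) := by rw [hig]; simp [Matrix.one_apply]
  -- second contraction: (2 - n) T μ = 2 S μ
  have c2 : ∀ μ, (2 - (n : ℝ)) * ∑ α, g⁻¹ μ α * θ α
      = 2 * ∑ α, g⁻¹ μ α * ψ α := by
    intro μ
    have e : ∑ ν, ∑ l, g⁻¹ ν l *
          (kron μ ν * θ l + kron μ l * θ ν - g ν l * ∑ α, g⁻¹ μ α * θ α)
        = ∑ ν, ∑ l, g⁻¹ ν l * (kron μ ν * ψ l + kron μ l * ψ ν) :=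
      Finset.sum_congr rfl fun ν _ => Finset.sum_congr rfl fun l _ => by
        rw [key μ ν l]
    simp only [mul_sub, mul_add, Finset.sum_sub_distrib, Finset.sum_add_distrib] at e
    have pA : ∀ u : Fin n → ℝ,
        ∑ ν, ∑ l, g⁻¹ ν l * (kron μ ν * u l) = ∑ α, g⁻¹ μ α * u α := by
      intro u
      have h1 : ∀ ν, ∑ l, g⁻¹ ν l * (kron μ ν * u l)
          = kron μ ν * ∑ l, g⁻¹ ν l * u l := by
        intro ν
        rw [Finset.mul_sum]
        exact Finset.sum_congr rfl fun l _ => by ring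
      rw [Finset.sum_congr rfl fun ν _ => h1 ν]
      simp [kron]
    have pB : ∀ u : Fin n → ℝ,
        ∑ ν, ∑ l, g⁻¹ ν l * (kron μ l * u ν) = ∑ α, g⁻¹ μ α * u α := by
      intro u
      rw [Finset.sum_comm]
      have h1 : ∀ l, ∑ ν, g⁻¹ ν l * (kron μ l * u ν)
          = kron μ l * ∑ ν, g⁻¹ ν l * u ν := by
        intro l
        rw [Finset.mul_sum]
        exact Finset.sum_congr rfl fun ν _ => by ring
      rw [Finset.sum_congr rfl fun l _ => h1 l]
      have h2 : ∑ l, kron μ l * ∑ ν, g⁻¹ ν l * u ν = ∑ ν, g⁻¹ ν μ * u ν := by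
        simp [kron]
      rw [h2]
      exact Finset.sum_congr rfl fun ν _ => by rw [hgi' ν μ]
    have pC : ∀ c : ℝ,
        ∑ ν, ∑ l, g⁻¹ ν l * (g ν l * c) = (n : ℝ) * c := by
      intro c
      have h1 : ∀ ν, ∑ l, g⁻¹ ν l * (g ν l * c)
          = (∑ l, g⁻¹ ν l * g ν l) * c := by
        intro ν
        rw [Finset.sum_mul]
        exact Finset.sum_congr rfl fun l _ => by ring
      rw [Finset.sum_congr rfl fun ν _ => h1 ν, ← Finset.sum_mul, htr]
    rw [pA θ, pB θ, pC _, pA ψ, pB ψ] at e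
    linarith
  -- combine the two contractions: T = 0
  have hT0 : ∀ μ, ∑ α, g⁻¹ μ α * θ α = 0 := by
    intro μ
    have h1 := c2 μ
    have h2 : ((n : ℝ) + 1) * ∑ α, g⁻¹ μ α * ψ α
        = (n : ℝ) * ∑ α, g⁻¹ μ α * θ α := by
      rw [Finset.mul_sum, Finset.mul_sum]
      exact Finset.sum_congr rfl fun α _ => by
        linear_combination (-(g⁻¹ μ α)) * c1 α
    have h3 : ((n : ℝ) ^ 2 + n - 2) * ∑ α, g⁻¹ μ α * θ α = 0 := by
      linear_combination (-(n : ℝ) - 1) * h1 + (-2 : ℝ) * h2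
    have hn' : (2 : ℝ) ≤ (n : ℝ) := by exact_mod_cast hn
    have hcoef : ((n : ℝ) ^ 2 + n - 2) ≠ 0 := by nlinarith
    exact (mul_eq_zero.mp h3).resolve_left hcoef
  funext l
  have := hgT θ l
  simp only [hT0, mul_zero, Finset.sum_const_zero] at this
  simpa using this.symm

/-- Algebraic core of Weyl's 1921 theorem: if the difference of the
scale-connection terms of two covectors (with the same symmetric invertible
Riemannian component g) has projective form, then the covectors coincide. -/
theorem weyl1921_algebraic_core (n : ℕ) (hn : 2 ≤ n)
    (g : Matrix (Fin n) (Fin n) ℝ) (hsym : gᵀ = g) (hinv : IsUnit g)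
    (φ φ' : Fin n → ℝ)
    (h : ∃ ψ : Fin n → ℝ, ∀ μ ν l : Fin n,
      scaleConnTerm g φ μ ν l - scaleConnTerm g φ' μ ν l
        = kron μ ν * ψ l + kron μ l * ψ ν) :
    φ = φ' := by
  obtain ⟨ψ, h⟩ := h
  have hθ : (fun i => φ i - φ' i) = 0 := by
    apply weyl_aux_core n hn g hsym hinv _ ψ
    intro μ ν l
    show kron μ ν * (φ l - φ' l) + kron μ l * (φ ν - φ' ν)
        - g ν l * ∑ α, g⁻¹ μ α * (φ α - φ' α)
        = kron μ ν * ψ l + kron μ l * ψ ν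
    have hs : ∑ α, g⁻¹ μ α * (φ α - φ' α)
        = (∑ α, g⁻¹ μ α * φ α) - ∑ α, g⁻¹ μ α * φ' α := by
      rw [← Finset.sum_sub_distrib]
      exact Finset.sum_congr rfl fun α _ => by ring
    have h0 := h μ ν l
    simp only [scaleConnTerm] at h0
    rw [hs]
    linear_combination h0
  funext x
  have := congrFun hθ x
  simpa [sub_eq_zero] using this
end
end

section
/- Weyl's theorem (1921): a Weylian metric is uniquely determined by its projective and conformal structures. Precisely: let n ≥ 2, U ⊆ ℝⁿ open, g : U → Matrix (Fin n) (Fin n) ℝ differentiable with symmetric invertible values, Ω : U → ℝ positive and differentiable, and φ, φ̃ two 1-forms on U. If at every point x ∈ U the affine connections of the two Weylian metrics represented by (g, φ) and (Ω² g, φ̃) are projectively equivalent, i.e. there exists ψ : Fin n → ℝ (depending on x) with Γ(Ω²g, φ̃)^μ_{νλ}(x) − Γ(g, φ)^μ_{νλ}(x) = δ^μ_ν ψ_λ + δ^μ_λ ψ_ν for all μ, ν, λ, then φ̃_ν(x) = φ_ν(x) − Ω(x)⁻¹ ∂_ν Ω(x) for all x ∈ U and all ν; that is, (Ω² g, φ̃)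 is exactly the gauge transform of (g, φ) by Ω, so the two gauges determine the same Weylian metric. -/
open scoped BigOperators
open Matrix

noncomputable section

lemma pd_mul {n : ℕ} {f h : Euc n → ℝ} {x : Euc n}
    (hf : DifferentiableAt ℝ f x) (hh : DifferentiableAt ℝ h x) (ν : Fin n) :
    pd (fun y => f y * h y) ν x = f x * pd h ν x + h x * pd f ν x := by
  unfold pd
  rw [fderiv_fun_mul hf hh]
  simp

/-- Weyl's theorem (1921): a Weylian metric is uniquely determined by its
projective and conformal structures. If the affine connections of the gauges
(g, φ) and (Ω²g, φ̃) are projectively equivalent at every point of U, then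
(Ω²g, φ̃) is exactly the gauge transform of (g, φ) by Ω. -/
theorem weyl1921_projective_conformal_determine_metric (n : ℕ) (hn : 2 ≤ n)
    (U : Set (Euc n)) (hU : IsOpen U)
    (g : Euc n → Matrix (Fin n) (Fin n) ℝ)
    (hgsym : ∀ y ∈ U, (g y)ᵀ = g y) (hginv : ∀ y ∈ U, IsUnit (g y))
    (hgdiff : ∀ μ ν : Fin n, ∀ y ∈ U, DifferentiableAt ℝ (fun z => g z μ ν) y)
    (Ω : Euc n → ℝ) (hΩpos : ∀ y ∈ U, 0 < Ω y)
    (hΩdiff : ∀ y ∈ U, DifferentiableAt ℝ Ω y)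
    (φ φt : Fin n → Euc n → ℝ)
    (hproj : ∀ x ∈ U, ∃ ψ : Fin n → ℝ, ∀ μ ν l : Fin n,
      weylConn (fun y => (Ω y) ^ 2 • g y) φt μ ν l x - weylConn g φ μ ν l x
        = kron μ ν * ψ l + kron μ l * ψ ν) :
    ∀ x ∈ U, ∀ ν : Fin n, φt ν x = φ ν x - (Ω x)⁻¹ * pd Ω ν x := by
  intro x hx
  -- basic facts about g x
  have hdet : IsUnit (g x).det := (Matrix.isUnit_iff_isUnit_det _).mp (hginv x hx)
  have hAB : g x * (g x)⁻¹ = 1 := Matrix.mul_nonsing_inv _ hdet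
  have hBA : (g x)⁻¹ * g x = 1 := Matrix.nonsing_inv_mul _ hdet
  have hsyme : ∀ a b, g x a b = g x b a := by
    intro a b
    rw [← Matrix.transpose_apply (g x) b a, hgsym x hx]
  have hBsyme : ∀ a b, (g x)⁻¹ a b = (g x)⁻¹ b a := by
    intro a b
    have h1 : ((g x)⁻¹)ᵀ = (g x)⁻¹ := by
      rw [Matrix.transpose_nonsing_inv, hgsym x hx]
    rw [← Matrix.transpose_apply (g x)⁻¹ b a, h1]
  have hcontrBA : ∀ i j, ∑ α, (g x)⁻¹ i α * g x α j = kron i j := by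
    intro i j
    have := congrFun (congrFun hBA i) j
    rw [Matrix.mul_apply] at this
    rw [this, Matrix.one_apply, kron]
  have hcontrAB : ∀ i j, ∑ α, g x i α * (g x)⁻¹ α j = kron i j := by
    intro i j
    have := congrFun (congrFun hAB i) j
    rw [Matrix.mul_apply] at this
    rw [this, Matrix.one_apply, kron]
  have hΩx : 0 < Ω x := hΩpos x hx
  have hΩne : Ω x ≠ 0 := ne_of_gt hΩx
  have hΩd : DifferentiableAt ℝ Ω x := hΩdiff x hx
  -- inverse of the conformally scaled metric
  have hginv2 : (Ω x ^ 2 • g x)⁻¹ = (Ω x ^ 2)⁻¹ • (g x)⁻¹ := by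
    apply Matrix.inv_eq_right_inv
    rw [Matrix.smul_mul, Matrix.mul_smul, smul_smul, hAB,
      mul_inv_cancel₀ (by positivity : Ω x ^ 2 ≠ 0)]
    simp
  -- derivatives of the scaled metric entries
  have hpd : ∀ (i j ν' : Fin n), pd (fun y => Ω y ^ 2 * g y i j) ν' x
      = Ω x ^ 2 * pd (fun y => g y i j) ν' x + 2 * Ω x * pd Ω ν' x * g x i j := by
    intro i j ν'
    have he : (fun y => Ω y ^ 2 * g y i j) = fun y => (Ω y * Ω y) * g y i j := by
      funext y
      rw [pow_two]
    rw [he, pd_mul (f := fun y => Ω y * Ω y) (hΩd.mul hΩd) (hgdiff i j x hx), pd_mul hΩd hΩd, pow_two]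
    ring
  -- the gauge-covector candidate
  set θ : Fin n → ℝ := fun α => φt α x - φ α x + (Ω x)⁻¹ * pd Ω α x with hθdef
  -- key computation: the difference of the Weyl connections
  have hkey : ∀ μ ν l : Fin n,
      weylConn (fun y => (Ω y) ^ 2 • g y) φt μ ν l x - weylConn g φ μ ν l x
        = kron μ ν * θ l + kron μ l * θ ν - g x ν l * ∑ α, (g x)⁻¹ μ α * θ α := by
    intro μ ν l
    have hchr : christoffel (fun y => (Ω y) ^ 2 • g y) μ ν l x
        = christoffel g μ ν l x + (Ω x)⁻¹ * pd Ω ν x * kron μ l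
          + (Ω x)⁻¹ * pd Ω l x * kron μ ν
          - g x ν l * ∑ α, (g x)⁻¹ μ α * ((Ω x)⁻¹ * pd Ω α x) := by
      unfold christoffel
      simp only [hginv2, Matrix.smul_apply, smul_eq_mul, hpd]
      have key : ∀ α : Fin n, (Ω x ^ 2)⁻¹ * (g x)⁻¹ μ α *
          (Ω x ^ 2 * pd (fun y => g y l α) ν x + 2 * Ω x * pd Ω ν x * g x l α
            + (Ω x ^ 2 * pd (fun y => g y α ν) l x + 2 * Ω x * pd Ω l x * g x α ν)
            - (Ω x ^ 2 * pd (fun y => g y ν l) α x + 2 * Ω x * pd Ω α x * g x ν l))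
        = (g x)⁻¹ μ α * (pd (fun y => g y l α) ν x + pd (fun y => g y α ν) l x
            - pd (fun y => g y ν l) α x)
          + 2 * ((Ω x)⁻¹ * pd Ω ν x) * ((g x)⁻¹ μ α * g x l α)
          + 2 * ((Ω x)⁻¹ * pd Ω l x) * ((g x)⁻¹ μ α * g x α ν)
          - 2 * g x ν l * ((g x)⁻¹ μ α * ((Ω x)⁻¹ * pd Ω α x)) := by
        intro α
        field_simp
        ring
      rw [Finset.sum_congr rfl fun α _ => key α]
      rw [Finset.sum_sub_distrib, Finset.sum_add_distrib, Finset.sum_add_distrib,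
        ← Finset.mul_sum, ← Finset.mul_sum, ← Finset.mul_sum]
      have h1 : ∑ α, (g x)⁻¹ μ α * g x l α = kron μ l := by
        rw [← hcontrBA μ l]
        exact Finset.sum_congr rfl fun α _ => by rw [hsyme l α]
      have h2 : ∑ α, (g x)⁻¹ μ α * g x α ν = kron μ ν := hcontrBA μ ν
      rw [h1, h2]
      ring
    unfold weylConn
    beta_reduce
    rw [hchr]
    have hfact : (Ω x ^ 2 • g x) ν l * ∑ α, (Ω x ^ 2 • g x)⁻¹ μ α * φt α x
        = g x ν l * ∑ α, (g x)⁻¹ μ α * φt α x := by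
      simp only [hginv2, Matrix.smul_apply, smul_eq_mul]
      rw [show (∑ α, (Ω x ^ 2)⁻¹ * (g x)⁻¹ μ α * φt α x)
          = (Ω x ^ 2)⁻¹ * ∑ α, (g x)⁻¹ μ α * φt α x by
        rw [Finset.mul_sum]; exact Finset.sum_congr rfl fun α _ => by ring]
      field_simp
    rw [hfact]
    have hsums : ∑ α, (g x)⁻¹ μ α * θ α
        = (∑ α, (g x)⁻¹ μ α * φt α x) - (∑ α, (g x)⁻¹ μ α * φ α x)
          + ∑ α, (g x)⁻¹ μ α * ((Ω x)⁻¹ * pd Ω α x) := by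
      rw [← Finset.sum_sub_distrib, ← Finset.sum_add_distrib]
      exact Finset.sum_congr rfl fun α _ => by simp only [hθdef]; ring
    rw [hsums]
    simp only [hθdef]
    ring
  -- get ψ and combine
  obtain ⟨ψ, hψ⟩ := hproj x hx
  have heq : ∀ μ ν l : Fin n,
      kron μ ν * θ l + kron μ l * θ ν - g x ν l * ∑ α, (g x)⁻¹ μ α * θ α
        = kron μ ν * ψ l + kron μ l * ψ ν := fun μ ν l => by
    rw [← hkey μ ν l]; exact hψ μ ν l
  set S : Fin n → ℝ := fun μ => ∑ α, (g x)⁻¹ μ α * θ α with hSdef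
  set T : Fin n → ℝ := fun μ => ∑ α, (g x)⁻¹ μ α * ψ α with hTdef
  -- contraction 1 : n θ l = (n+1) ψ l
  have eq1 : ∀ l, (n : ℝ) * θ l = ((n : ℝ) + 1) * ψ l := by
    intro l
    have hs : ∑ ν, (kron ν ν * θ l + kron ν l * θ ν - g x ν l * S ν)
        = ∑ ν, (kron ν ν * ψ l + kron ν l * ψ ν) :=
      Finset.sum_congr rfl fun ν _ => heq ν ν l
    have hAS : ∑ ν, g x ν l * S ν = θ l := by
      simp only [hSdef, Finset.mul_sum]
      rw [Finset.sum_comm]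
      have : ∀ α, ∑ ν, g x ν l * ((g x)⁻¹ ν α * θ α)
          = (∑ ν, g x l ν * (g x)⁻¹ ν α) * θ α := by
        intro α
        rw [Finset.sum_mul]
        exact Finset.sum_congr rfl fun ν _ => by rw [hsyme ν l]; ring
      rw [Finset.sum_congr rfl fun α _ => this α]
      simp only [hcontrAB]
      simp [kron]
    rw [Finset.sum_sub_distrib, Finset.sum_add_distrib, Finset.sum_add_distrib, hAS] at hs
    simp only [kron, if_pos rfl] at hs
    rw [Finset.sum_const, Finset.card_univ, Fintype.card_fin] at hs
    rw [Finset.sum_const, Finset.card_univ, Fintype.card_fin] at hs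
    have hθl : (∑ ν, (if ν = l then (1:ℝ) else 0) * θ ν) = θ l := by
      simp [ite_mul]
    have hψl : (∑ ν, (if ν = l then (1:ℝ) else 0) * ψ ν) = ψ l := by
      simp [ite_mul]
    rw [hθl, hψl] at hs
    simp only [nsmul_eq_mul, if_true, one_mul] at hs
    linarith [hs]
  -- contraction 2 : (2 - n) S μ = 2 T μ
  have eq2 : ∀ μ, (2 - (n : ℝ)) * S μ = 2 * T μ := by
    intro μ
    have hs : ∑ ν, ∑ l, (g x)⁻¹ ν l *
          (kron μ ν * θ l + kron μ l * θ ν - g x ν l * S μ)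
        = ∑ ν, ∑ l, (g x)⁻¹ ν l * (kron μ ν * ψ l + kron μ l * ψ ν) :=
      Finset.sum_congr rfl fun ν _ => Finset.sum_congr rfl fun l _ => by
        rw [heq μ ν l]
    -- helper sums
    have p1 : ∀ (u : Fin n → ℝ), ∑ ν, ∑ l, (g x)⁻¹ ν l * (kron μ ν * u l)
        = ∑ l, (g x)⁻¹ μ l * u l := by
      intro u
      have : ∀ ν, ∑ l, (g x)⁻¹ ν l * (kron μ ν * u l)
          = kron μ ν * ∑ l, (g x)⁻¹ ν l * u l := by
        intro ν
        rw [Finset.mul_sum]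
        exact Finset.sum_congr rfl fun l _ => by ring
      rw [Finset.sum_congr rfl fun ν _ => this ν]
      simp [kron, ite_mul]
    have p2 : ∀ (u : Fin n → ℝ), ∑ ν, ∑ l, (g x)⁻¹ ν l * (kron μ l * u ν)
        = ∑ ν, (g x)⁻¹ μ ν * u ν := by
      intro u
      have : ∀ ν, ∑ l, (g x)⁻¹ ν l * (kron μ l * u ν)
          = (g x)⁻¹ ν μ * u ν := by
        intro ν
        have : ∀ l, (g x)⁻¹ ν l * (kron μ l * u ν)
            = (if μ = l then (g x)⁻¹ ν l * u ν else 0) := by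
          intro l
          by_cases h : μ = l <;> simp [kron, h]
        rw [Finset.sum_congr rfl fun l _ => this l]
        simp
      rw [Finset.sum_congr rfl fun ν _ => this ν]
      exact Finset.sum_congr rfl fun ν _ => by rw [hBsyme ν μ]
    have p3 : ∑ ν, ∑ l, (g x)⁻¹ ν l * (g x ν l * S μ) = (n : ℝ) * S μ := by
      have : ∀ ν, ∑ l, (g x)⁻¹ ν l * (g x ν l * S μ) = kron ν ν * S μ := by
        intro ν
        rw [show (∑ l, (g x)⁻¹ ν l * (g x ν l * S μ))
            = (∑ l, (g x)⁻¹ ν l * g x l ν) * S μ by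
          rw [Finset.sum_mul]
          exact Finset.sum_congr rfl fun l _ => by rw [hsyme ν l]; ring]
        rw [hcontrBA ν ν]
      rw [Finset.sum_congr rfl fun ν _ => this ν]
      simp [kron]
    have expand : ∀ (u : Fin n → ℝ) (v : Fin n → ℝ),
        (∑ ν, ∑ l, (g x)⁻¹ ν l * (kron μ ν * u l + kron μ l * u ν - g x ν l * v μ))
        = (∑ ν, ∑ l, (g x)⁻¹ ν l * (kron μ ν * u l))
          + (∑ ν, ∑ l, (g x)⁻¹ ν l * (kron μ l * u ν))
          - (∑ ν, ∑ l, (g x)⁻¹ ν l * (g x ν l * v μ)) := by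
      intro u v
      rw [← Finset.sum_add_distrib, ← Finset.sum_sub_distrib]
      refine Finset.sum_congr rfl fun ν _ => ?_
      rw [← Finset.sum_add_distrib, ← Finset.sum_sub_distrib]
      exact Finset.sum_congr rfl fun l _ => by ring
    have expand2 : ∀ (u : Fin n → ℝ),
        (∑ ν, ∑ l, (g x)⁻¹ ν l * (kron μ ν * u l + kron μ l * u ν))
        = (∑ ν, ∑ l, (g x)⁻¹ ν l * (kron μ ν * u l))
          + (∑ ν, ∑ l, (g x)⁻¹ ν l * (kron μ l * u ν)) := by
      intro u
      rw [← Finset.sum_add_distrib]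
      refine Finset.sum_congr rfl fun ν _ => ?_
      rw [← Finset.sum_add_distrib]
      exact Finset.sum_congr rfl fun l _ => by ring
    rw [expand θ S, expand2 ψ, p1 θ, p2 θ, p3, p1 ψ, p2 ψ] at hs
    simp only [hSdef, hTdef]
    simp only [hSdef, hTdef] at hs
    linarith [hs]
  -- combine: S μ = 0
  have hS0 : ∀ μ, S μ = 0 := by
    intro μ
    have eq3 : ((n : ℝ) + 1) * T μ = (n : ℝ) * S μ := by
      simp only [hSdef, hTdef, Finset.mul_sum]
      refine Finset.sum_congr rfl fun α _ => ?_
      rw [show ((n:ℝ)+1) * ((g x)⁻¹ μ α * ψ α)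
          = (g x)⁻¹ μ α * (((n:ℝ)+1) * ψ α) by ring, ← eq1 α]
      ring
    have h2 := eq2 μ
    have hnR : (2 : ℝ) ≤ (n : ℝ) := by exact_mod_cast hn
    have hc : ((n : ℝ) + 1) * (2 - (n : ℝ)) * S μ = 2 * (n : ℝ) * S μ := by
      nlinarith [h2, eq3]
    have hcoef : ((n : ℝ) + 1) * (2 - (n : ℝ)) - 2 * (n : ℝ) ≠ 0 := by
      nlinarith
    have : (((n : ℝ) + 1) * (2 - (n : ℝ)) - 2 * (n : ℝ)) * S μ = 0 := by ring_nf; nlinarith [hc]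
    rcases mul_eq_zero.mp this with h | h
    · exact absurd h hcoef
    · exact h
  -- conclude θ = 0
  have hθ0 : ∀ l, θ l = 0 := by
    intro l
    have h1 : θ l = ∑ μ, g x l μ * S μ := by
      simp only [hSdef, Finset.mul_sum]
      rw [Finset.sum_comm]
      have : ∀ α, ∑ μ, g x l μ * ((g x)⁻¹ μ α * θ α)
          = (∑ μ, g x l μ * (g x)⁻¹ μ α) * θ α := by
        intro α
        rw [Finset.sum_mul]
        exact Finset.sum_congr rfl fun μ _ => by ring
      rw [Finset.sum_congr rfl fun α _ => this α]
      simp only [hcontrAB]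
      simp [kron]
    rw [h1]
    simp [hS0]
  intro ν
  have := hθ0 ν
  simp only [hθdef] at this
  linarith [this]
end
end

section
/- Let V be a finite-dimensional real vector space with dim V ≥ 2 and let B : V → V → ℝ be a symmetric nondegenerate bilinear form. If v ∈ V is such that for every ξ ∈ V the vector B(ξ, ξ) • v is a scalar multiple of ξ (i.e. ∀ ξ, ∃ c : ℝ, B(ξ, ξ) • v = c • ξ), then v = 0. (This is the key lemma in Weyl's proof that projective and conformal structure determine the Weylian metric.) -/
private lemma weyl_aux (V : Type*) [AddCommGroup V] [Module ℝ V]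
    (v x : V) (hv : v ≠ 0) (hx : x ≠ 0) (hxv : v ∉ Submodule.span ℝ {x})
    (a b : ℝ) (hb : b ≠ 0) : v ∉ Submodule.span ℝ {a • v + b • x} := by
  intro hmem
  rw [Submodule.mem_span_singleton] at hmem
  obtain ⟨t, ht⟩ := hmem
  rcases eq_or_ne t 0 with rfl | ht0
  · simp at ht; exact hv ht.symm
  · have hx' : (t * b) • x = (1 - t * a) • v := by
      have ht' : (t * a) • v + (t * b) • x = v := by
        rw [← smul_smul, ← smul_smul, ← smul_add]; exact ht
      have h2 : (t * b) • x = v - (t * a) • v := by rw [eq_sub_iff_add_eq, add_comm]; exact ht'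
      rw [h2, sub_smul, one_smul]
    have htb : t * b ≠ 0 := mul_ne_zero ht0 hb
    have hxeq : x = ((t * b)⁻¹ * (1 - t * a)) • v := by
      have := congrArg (fun z => (t * b)⁻¹ • z) hx'
      simp only [smul_smul, inv_mul_cancel₀ htb, one_smul] at this
      exact this
    have hs : (t * b)⁻¹ * (1 - t * a) ≠ 0 := by
      intro h0; apply hx; rw [hxeq, h0, zero_smul]
    apply hxv
    rw [Submodule.mem_span_singleton]
    refine ⟨((t * b)⁻¹ * (1 - t * a))⁻¹, ?_⟩
    rw [hxeq, smul_smul, inv_mul_cancel₀ hs, one_smul]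

/-- Key lemma in Weyl's proof that projective and conformal structure determine
the Weylian metric: if B is a symmetric nondegenerate bilinear form on a real
vector space of dimension ≥ 2 and B(ξ,ξ) • v is always a scalar multiple of ξ,
then v = 0. -/
theorem weyl_projective_key_lemma (V : Type*) [AddCommGroup V] [Module ℝ V]
    [FiniteDimensional ℝ V] (hdim : 2 ≤ Module.finrank ℝ V)
    (B : LinearMap.BilinForm ℝ V)
    (hsymm : ∀ x y : V, B x y = B y x)
    (hnd : ∀ x : V, (∀ y : V, B x y = 0) → x = 0)
    (v : V) (h : ∀ ξ : V, ∃ c : ℝ, B ξ ξ • v = c • ξ) :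
    v = 0 := by
  by_cases hv : v = 0
  · exact hv
  -- Step 1: B ξ ξ = 0 whenever v ∉ span {ξ}
  have hzero : ∀ ξ : V, v ∉ Submodule.span ℝ {ξ} → B ξ ξ = 0 := by
    intro ξ hξ
    by_contra hB
    obtain ⟨c, hc⟩ := h ξ
    apply hξ
    rw [Submodule.mem_span_singleton]
    refine ⟨(B ξ ξ)⁻¹ * c, ?_⟩
    have := congrArg (fun z => (B ξ ξ)⁻¹ • z) hc
    simpa [smul_smul, inv_mul_cancel₀ hB] using this.symm
  -- Step 2: polarization: for x with x ≠ 0 and v ∉ span {x}, B v x = 0 and B v v = 0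
  have key : ∀ x : V, x ≠ 0 → v ∉ Submodule.span ℝ {x} → B v x = 0 ∧ B v v = 0 := by
    intro x hx hxv
    have h1 : B x x = 0 := hzero x hxv
    have h2 : B (v + x) (v + x) = 0 := by
      have := hzero (v + x) (by
        have := weyl_aux V v x hv hx hxv 1 1 one_ne_zero
        simpa using this)
      exact this
    have h3 : B (v - x) (v - x) = 0 := by
      have := hzero (v - x) (by
        have := weyl_aux V v x hv hx hxv 1 (-1) (by norm_num)
        simpa [sub_eq_add_neg] using this)
      exact this
    have e2 : B v v + B x v + (B v x + B x x) = 0 := by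
      simpa [map_add, LinearMap.add_apply] using h2
    have e3 : B v v - B v x - B x v + B x x = 0 := by
      have := h3
      simp only [map_sub, LinearMap.sub_apply] at this
      linarith
    have hsym := hsymm x v
    constructor <;> linarith
  -- Step 3: find w with v ∉ span {w}
  have hspan : Submodule.span ℝ {v} ≠ ⊤ := by
    intro htop
    have h1 : Module.finrank ℝ (Submodule.span ℝ {v}) = 1 := finrank_span_singleton hv
    rw [htop, finrank_top] at h1
    omega
  obtain ⟨w, hw⟩ : ∃ w, w ∉ Submodule.span ℝ {v} := by
    by_contra hall
    push_neg at hall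
    exact hspan (Submodule.eq_top_iff'.mpr hall)
  have hw0 : w ≠ 0 := fun h0 => hw (h0 ▸ Submodule.zero_mem _)
  have hvw : v ∉ Submodule.span ℝ {w} := by
    intro hmem
    rw [Submodule.mem_span_singleton] at hmem
    obtain ⟨t, ht⟩ := hmem
    have ht0 : t ≠ 0 := by rintro rfl; simp at ht; exact hv ht.symm
    apply hw
    rw [Submodule.mem_span_singleton]
    exact ⟨t⁻¹, by rw [← ht, smul_smul, inv_mul_cancel₀ ht0, one_smul]⟩
  have hBvv : B v v = 0 := (key w hw0 hvw).2
  -- Step 4: B v y = 0 for all y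
  have hall : ∀ y : V, B v y = 0 := by
    intro y
    by_cases hy0 : y = 0
    · simp [hy0]
    by_cases hyv : v ∈ Submodule.span ℝ {y}
    · rw [Submodule.mem_span_singleton] at hyv
      obtain ⟨s, hs⟩ := hyv
      have hs0 : s ≠ 0 := by rintro rfl; simp at hs; exact hv hs.symm
      have hy : y = s⁻¹ • v := by rw [← hs, smul_smul, inv_mul_cancel₀ hs0, one_smul]
      rw [hy, map_smul, smul_eq_mul, hBvv, mul_zero]
    · exact (key y hy0 hyv).1
  exact absurd (hnd v hall) hv
end

section
/- Generalized Matveev–Trautman criterion for Weyl compatibility (pointwise form): let n ≥ 1, g a symmetric invertible real n×n matrix, φ : Fin n → ℝ a covector, and A, B : Fin n → Fin n → Fin n → ℝ arrays symmetric in their lower indices (A plays the role of the Levi-Civita connection of g, B of a representative of a projective structure). Define T^i_{jk} = Π(A − B)^i_{jk} and the generalized Matveev symbol T̃^i_{jk} = T^i_{jk} + (n+1)⁻¹ (δ^i_j φ_k + δ^i_k φ_j) − g_{jk} φ^i, with φ^i = Σ_α (g⁻¹)^{iα} φ_α. Then the Weyl connection array A + Γ(φ) is projectively equivalent to B — i.e.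 there exists ψ : Fin n → ℝ with A^i_{jk} + Γ(φ)^i_{jk} − B^i_{jk} = δ^i_j ψ_k + δ^i_k ψ_j for all i, j, k — if and only if T̃^i_{jk} = 0 for all i, j, k. -/
open scoped BigOperators
open Matrix

noncomputable section

/-- Thomas symbol Π(D)^i_{jk}
  = D^i_{jk} − (n+1)⁻¹ (δ^i_j Σ_l D^l_{lk} + δ^i_k Σ_l D^l_{lj}). -/
def thomasSymbol {n : ℕ} (D : Fin n → Fin n → Fin n → ℝ) (i j k : Fin n) : ℝ :=
  D i j k - ((n : ℝ) + 1)⁻¹ *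
    (kron i j * (∑ l, D l l k) + kron i k * (∑ l, D l l j))

/-- Generalized Matveev–Trautman criterion for Weyl compatibility (pointwise
form): the Weyl connection array A + Γ(φ) is projectively equivalent to B iff
the generalized Matveev symbol T̃ vanishes, where
T̃^i_{jk} = Π(A−B)^i_{jk} + (n+1)⁻¹ (δ^i_j φ_k + δ^i_k φ_j) − g_{jk} φ^i. -/
theorem weyl_compatibility_iff_matveev_symbol_vanishes (n : ℕ) (hn : 1 ≤ n)
    (g : Matrix (Fin n) (Fin n) ℝ) (hsym : gᵀ = g) (hinv : IsUnit g)
    (φ : Fin n → ℝ)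
    (A B : Fin n → Fin n → Fin n → ℝ)
    (hAsym : ∀ i j k : Fin n, A i j k = A i k j)
    (hBsym : ∀ i j k : Fin n, B i j k = B i k j) :
    (∃ ψ : Fin n → ℝ, ∀ i j k : Fin n,
        A i j k + scaleConnTerm g φ i j k - B i j k
          = kron i j * ψ k + kron i k * ψ j)
      ↔ (∀ i j k : Fin n,
          thomasSymbol (fun a b c => A a b c - B a b c) i j k
            + ((n : ℝ) + 1)⁻¹ * (kron i j * φ k + kron i k * φ j)
            - g j k * (∑ α, g⁻¹ i α * φ α) = 0) := by

  have hd : IsUnit g.det := (Matrix.isUnit_iff_isUnit_det g).mp hinv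
  have hmul : g * g⁻¹ = 1 := Matrix.mul_nonsing_inv g hd
  have hne : ((n:ℝ)+1) ≠ 0 := by positivity
  have hsym' : ∀ k l, g k l = g l k := fun k l => by
    have h := congrFun (congrFun hsym l) k
    rwa [Matrix.transpose_apply] at h
  have htr : ∀ k, (∑ l, g l k * ∑ α, g⁻¹ l α * φ α) = φ k := by
    intro k
    have h1 : ∀ l : Fin n, g l k * ∑ α, g⁻¹ l α * φ α
        = ∑ α, g k l * g⁻¹ l α * φ α := by
      intro l
      rw [hsym' l k, Finset.mul_sum]
      exact Finset.sum_congr rfl (fun α _ => by ring)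
    rw [Finset.sum_congr rfl (fun l _ => h1 l), Finset.sum_comm]
    have h2 : ∀ α : Fin n, (∑ l, g k l * g⁻¹ l α * φ α)
        = (g * g⁻¹) k α * φ α := by
      intro α; rw [Matrix.mul_apply, Finset.sum_mul]
    rw [Finset.sum_congr rfl (fun α _ => h2 α), hmul]
    simp [Matrix.one_apply]
  have s1 : ∀ (f : Fin n → ℝ) (c : ℝ), (∑ l : Fin n, kron l l * c) = (n:ℝ) * c := by
    intro f c; simp [kron, Finset.sum_const, mul_comm]
  have s2 : ∀ (f : Fin n → ℝ) (k : Fin n), (∑ l : Fin n, kron l k * f l) = f k := by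
    intro f k; simp [kron]
  constructor
  · rintro ⟨ψ, h⟩ i j k
    have hS : ∀ k, (∑ l : Fin n, (A l l k - B l l k))
        = ((n:ℝ)+1) * ψ k - (n:ℝ) * φ k := by
      intro k
      have hsum : (∑ l : Fin n, (A l l k + scaleConnTerm g φ l l k - B l l k))
          = ∑ l : Fin n, (kron l l * ψ k + kron l k * ψ l) :=
        Finset.sum_congr rfl (fun l _ => h l l k)
      simp only [scaleConnTerm] at hsum
      rw [Finset.sum_add_distrib] at hsum
      rw [s1 φ (ψ k), s2 ψ k] at hsum
      have expand : (∑ l : Fin n, (A l l k + (kron l l * φ k + kron l k * φ l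
            - g l k * ∑ α, g⁻¹ l α * φ α) - B l l k))
          = (∑ l : Fin n, (A l l k - B l l k))
            + ((∑ l : Fin n, kron l l * φ k) + (∑ l : Fin n, kron l k * φ l)
              - (∑ l, g l k * ∑ α, g⁻¹ l α * φ α)) := by
        rw [Finset.sum_sub_distrib, Finset.sum_add_distrib, Finset.sum_sub_distrib,
          Finset.sum_sub_distrib, Finset.sum_add_distrib]
        ring
      rw [expand, s1 φ (φ k), s2 φ k, htr k] at hsum
      linarith [hsum]
    have hAB : A i j k - B i j k = kron i j * ψ k + kron i k * ψ j
        - (kron i j * φ k + kron i k * φ j - g j k * ∑ α, g⁻¹ i α * φ α) := by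
      have := h i j k
      simp only [scaleConnTerm] at this
      linarith [this]
    simp only [thomasSymbol, hS, hAB]
    field_simp
    ring
  · intro hT
    refine ⟨fun k => ((n:ℝ)+1)⁻¹ * ((∑ l : Fin n, (A l l k - B l l k)) - φ k) + φ k,
      fun i j k => ?_⟩
    have := hT i j k
    simp only [thomasSymbol] at this
    simp only [scaleConnTerm]
    field_simp at this ⊢
    nlinarith [this]
end
end

section
/- Constancy of the length function along scale-covariant geodesics: let U ⊆ ℝⁿ be open, g : U → Matrix (Fin n) (Fin n) ℝ differentiable with symmetric invertible values, φ a 1-form on U, and let γ be a twice differentiable curve defined on an open interval I ⊆ ℝ with γ(I) ⊆ U. Suppose γ satisfies the scale-covariant geodesic equation: for all t ∈ I and all λ, γ̈^λ(t) + Σ_{μ,ν} Γ(g,φ)^λ_{μν}(γ(t)) γ̇^μ(t) γ̇^ν(t) − (Σ_ν φ_ν(γ(t)) γ̇^ν(t)) γ̇^λ(t) = 0. Then the length function t ↦ Σ_{μ,ν} g_{μν}(γ(t)) γ̇^μ(t) γ̇^ν(t) is constant on I. -/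
open scoped BigOperators
open Matrix

noncomputable section

section helpers

lemma euc_sum_single {n : ℕ} (v : Euc n) :
    (∑ α, v α • EuclideanSpace.single α (1:ℝ)) = v := by
  ext i
  rw [show ((∑ α, v α • EuclideanSpace.single α (1:ℝ)) i)
    = ∑ α, (v α • EuclideanSpace.single α (1:ℝ)) i from by rw [WithLp.ofLp_sum, Finset.sum_apply]]
  simp [EuclideanSpace.single_apply]

lemma clm_apply_eq_sum {n : ℕ} (f : Euc n →L[ℝ] ℝ) (v : Euc n) :
    f v = ∑ α, v α * f (EuclideanSpace.single α 1) := by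
  conv_lhs => rw [← euc_sum_single v]
  rw [map_sum]
  simp [smul_eq_mul]

lemma hasDerivAt_curve {n : ℕ} (γ : ℝ → Euc n) (t : ℝ)
    (h : ∀ μ, DifferentiableAt ℝ (fun s => γ s μ) t) :
    HasDerivAt γ ((WithLp.equiv 2 _).symm (fun μ => deriv (fun s => γ s μ) t)) t := by
  have h1 : HasDerivAt (fun s => (WithLp.equiv 2 (Fin n → ℝ)) (γ s))
      (fun μ => deriv (fun s => γ s μ) t) t :=
    hasDerivAt_pi.2 fun μ => (h μ).hasDerivAt
  have := (PiLp.continuousLinearEquiv 2 ℝ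
    (fun _ : Fin n => ℝ)).symm.hasFDerivAt.comp_hasDerivAt t h1
  exact this

lemma hasDerivAt_comp_curve {n : ℕ} (γ : ℝ → Euc n) (t : ℝ) (h : Euc n → ℝ)
    (hh : DifferentiableAt ℝ h (γ t))
    (hγ : ∀ μ, DifferentiableAt ℝ (fun s => γ s μ) t) :
    HasDerivAt (fun s => h (γ s)) (∑ α, pd h α (γ t) * deriv (fun s => γ s α) t) t := by
  have H := hh.hasFDerivAt.comp_hasDerivAt t (hasDerivAt_curve γ t hγ)
  have : (fderiv ℝ h (γ t)) ((WithLp.equiv 2 _).symm (fun μ => deriv (fun s => γ s μ) t))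
      = ∑ α, pd h α (γ t) * deriv (fun s => γ s α) t := by
    rw [clm_apply_eq_sum]
    simp [pd, mul_comm]
  rwa [this] at H

lemma sum3_rot {n : ℕ} (f : Fin n → Fin n → Fin n → ℝ) :
    (∑ x, ∑ c, ∑ d, f x c d) = ∑ c, ∑ d, ∑ x, f x c d := by
  rw [Finset.sum_comm]
  exact Finset.sum_congr rfl fun c _ => Finset.sum_comm

lemma sum3_inner {n : ℕ} (f : Fin n → Fin n → Fin n → ℝ) :
    (∑ x, ∑ c, ∑ d, f x c d) = ∑ x, ∑ d, ∑ c, f x c d :=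
  Finset.sum_congr rfl fun _ _ => Finset.sum_comm

lemma key_algebra (n : ℕ) (G Gi : Matrix (Fin n) (Fin n) ℝ)
    (hsym : ∀ i j, G i j = G j i)
    (hdelta : ∀ ν α, (∑ μ, G μ ν * Gi μ α) = if ν = α then (1:ℝ) else 0)
    (P : Fin n → Fin n → Fin n → ℝ) (D DD φv : Fin n → ℝ)
    (hgeo : ∀ l, DD l = (∑ ν, φv ν * D ν) * D l
      - ∑ μ, ∑ ν, ((1/2) * (∑ α, Gi l α * (P ν α μ + P α μ ν - P μ ν α))
          + (if l = μ then (1:ℝ) else 0) * φv ν + (if l = ν then (1:ℝ) else 0) * φv μ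
          - G μ ν * ∑ α, Gi l α * φv α) * D μ * D ν) :
    (∑ μ, ∑ ν, ((∑ α, P μ ν α * D α) * D μ * D ν
      + G μ ν * (DD μ * D ν) + G μ ν * (D μ * DD ν))) = 0 := by
  set F := ∑ ν, φv ν * D ν with hF
  set L := ∑ μ, ∑ ν, G μ ν * D μ * D ν with hL
  set S3 := ∑ a, ∑ b, ∑ c, P a b c * D a * D b * D c with hS3
  set W : Fin n → Fin n → Fin n → ℝ := fun l μ ν =>
      (1/2) * (∑ α, Gi l α * (P ν α μ + P α μ ν - P μ ν α))
        + (if l = μ then (1:ℝ) else 0) * φv ν + (if l = ν then (1:ℝ) else 0) * φv μ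
        - G μ ν * ∑ α, Gi l α * φv α with hW
  -- contracted connection
  have hC : ∀ ν a b, (∑ μ, G μ ν * W μ a b)
      = (1/2) * (P b ν a + P ν a b - P a b ν) + G ν a * φv b + G ν b * φv a
        - G a b * φv ν := by
    intro ν a b
    have e1 : ∀ (X : Fin n → ℝ), (∑ μ, G μ ν * ∑ α, Gi μ α * X α) = X ν := by
      intro X
      calc (∑ μ, G μ ν * ∑ α, Gi μ α * X α)
          = ∑ μ, ∑ α, (G μ ν * Gi μ α) * X α := by
            refine Finset.sum_congr rfl fun μ _ => ?_
            rw [Finset.mul_sum]; exact Finset.sum_congr rfl fun α _ => by ring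
        _ = ∑ α, (∑ μ, G μ ν * Gi μ α) * X α := by
            rw [Finset.sum_comm]
            exact Finset.sum_congr rfl fun α _ => (Finset.sum_mul _ _ _).symm
        _ = ∑ α, (if ν = α then (1:ℝ) else 0) * X α := by
            exact Finset.sum_congr rfl fun α _ => by rw [hdelta]
        _ = X ν := by simp
    calc (∑ μ, G μ ν * W μ a b)
        = (1/2) * (∑ μ, G μ ν * ∑ α, Gi μ α * (P b α a + P α a b - P a b α))
          + (∑ μ, (if μ = a then (1:ℝ) else 0) * (G μ ν * φv b))
          + (∑ μ, (if μ = b then (1:ℝ) else 0) * (G μ ν * φv a))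
          - G a b * (∑ μ, G μ ν * ∑ α, Gi μ α * φv α) := by
          rw [hW, Finset.mul_sum, Finset.mul_sum, ← Finset.sum_add_distrib,
            ← Finset.sum_add_distrib, ← Finset.sum_sub_distrib]
          exact Finset.sum_congr rfl fun μ _ => by ring
      _ = (1/2) * (P b ν a + P ν a b - P a b ν) + G ν a * φv b + G ν b * φv a
          - G a b * φv ν := by
          rw [e1, e1]
          simp only [ite_mul, one_mul, zero_mul, Finset.sum_ite_eq',
            Finset.mem_univ, if_true]
          rw [hsym a ν, hsym b ν]
  -- T : the contraction of DD with G and D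
  have hT : (∑ μ, ∑ ν, G μ ν * (DD μ * D ν)) = -((1/2) * S3) := by
    have hQ : (∑ x, ∑ ν, G x ν * ((∑ c, ∑ d, W x c d * D c * D d) * D ν))
        = (1/2) * S3 + F * L := by
      have step1 : (∑ x, ∑ ν, G x ν * ((∑ c, ∑ d, W x c d * D c * D d) * D ν))
          = ∑ ν, ∑ c, ∑ d, (∑ x, G x ν * W x c d) * (D c * D d * D ν) := by
        rw [Finset.sum_comm]
        refine Finset.sum_congr rfl fun ν _ => ?_
        calc (∑ x, G x ν * ((∑ c, ∑ d, W x c d * D c * D d) * D ν))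
            = ∑ x, ∑ c, ∑ d, (G x ν * W x c d) * (D c * D d * D ν) := by
              refine Finset.sum_congr rfl fun x _ => ?_
              rw [Finset.sum_mul, Finset.mul_sum]
              refine Finset.sum_congr rfl fun c _ => ?_
              rw [Finset.sum_mul, Finset.mul_sum]
              exact Finset.sum_congr rfl fun d _ => by ring
          _ = ∑ c, ∑ d, ∑ x, (G x ν * W x c d) * (D c * D d * D ν) := sum3_rot _
          _ = ∑ c, ∑ d, (∑ x, G x ν * W x c d) * (D c * D d * D ν) := by
              exact Finset.sum_congr rfl fun c _ => Finset.sum_congr rfl fun d _ =>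
                (Finset.sum_mul _ _ _).symm
      rw [step1]
      have step2 : (∑ ν, ∑ c, ∑ d, (∑ x, G x ν * W x c d) * (D c * D d * D ν))
          = ∑ ν, ∑ c, ∑ d,
              ((1/2) * (P d ν c * D c * D d * D ν)
              + (1/2) * (P ν c d * D c * D d * D ν)
              - (1/2) * (P c d ν * D c * D d * D ν)
              + G ν c * φv d * (D c * D d * D ν)
              + G ν d * φv c * (D c * D d * D ν)
              - G c d * φv ν * (D c * D d * D ν)) := by
        exact Finset.sum_congr rfl fun ν _ => Finset.sum_congr rfl fun c _ =>
          Finset.sum_congr rfl fun d _ => by rw [hC]; ring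
      rw [step2]
      simp only [Finset.sum_add_distrib, Finset.sum_sub_distrib]
      have A1 : (∑ ν, ∑ c, ∑ d, (1/2) * (P d ν c * D c * D d * D ν)) = (1/2) * S3 := by
        rw [show (∑ ν, ∑ c, ∑ d, (1/2) * (P d ν c * D c * D d * D ν))
            = ∑ ν, ∑ d, ∑ c, (1/2) * (P d ν c * D c * D d * D ν) from sum3_inner _]
        rw [show (∑ ν, ∑ d, ∑ c, (1/2) * (P d ν c * D c * D d * D ν))
            = ∑ d, ∑ ν, ∑ c, (1/2) * (P d ν c * D c * D d * D ν) from Finset.sum_comm]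
        rw [hS3, Finset.mul_sum]
        refine Finset.sum_congr rfl fun d _ => ?_
        rw [Finset.mul_sum]
        refine Finset.sum_congr rfl fun ν _ => ?_
        rw [Finset.mul_sum]
        exact Finset.sum_congr rfl fun c _ => by ring
      have A2 : (∑ ν, ∑ c, ∑ d, (1/2) * (P ν c d * D c * D d * D ν)) = (1/2) * S3 := by
        rw [hS3, Finset.mul_sum]
        refine Finset.sum_congr rfl fun ν _ => ?_
        rw [Finset.mul_sum]
        refine Finset.sum_congr rfl fun c _ => ?_
        rw [Finset.mul_sum]
        exact Finset.sum_congr rfl fun d _ => by ring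
      have A3 : (∑ ν, ∑ c, ∑ d, (1/2) * (P c d ν * D c * D d * D ν)) = (1/2) * S3 := by
        rw [show (∑ ν, ∑ c, ∑ d, (1/2) * (P c d ν * D c * D d * D ν))
            = ∑ c, ∑ ν, ∑ d, (1/2) * (P c d ν * D c * D d * D ν) from Finset.sum_comm]
        rw [show (∑ c, ∑ ν, ∑ d, (1/2) * (P c d ν * D c * D d * D ν))
            = ∑ c, ∑ d, ∑ ν, (1/2) * (P c d ν * D c * D d * D ν) from sum3_inner _]
        rw [hS3, Finset.mul_sum]
        refine Finset.sum_congr rfl fun c _ => ?_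
        rw [Finset.mul_sum]
        refine Finset.sum_congr rfl fun d _ => ?_
        rw [Finset.mul_sum]
      have B1 : (∑ ν, ∑ c, ∑ d, G ν c * φv d * (D c * D d * D ν)) = L * F := by
        rw [hL, hF, Finset.sum_mul]
        refine Finset.sum_congr rfl fun ν _ => ?_
        rw [Finset.sum_mul]
        refine Finset.sum_congr rfl fun c _ => ?_
        rw [Finset.mul_sum]
        exact Finset.sum_congr rfl fun d _ => by ring
      have B2 : (∑ ν, ∑ c, ∑ d, G ν d * φv c * (D c * D d * D ν)) = L * F := by
        rw [show (∑ ν, ∑ c, ∑ d, G ν d * φv c * (D c * D d * D ν))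
            = ∑ ν, ∑ d, ∑ c, G ν d * φv c * (D c * D d * D ν) from sum3_inner _]
        rw [hL, hF, Finset.sum_mul]
        refine Finset.sum_congr rfl fun ν _ => ?_
        rw [Finset.sum_mul]
        refine Finset.sum_congr rfl fun d _ => ?_
        rw [Finset.mul_sum]
        exact Finset.sum_congr rfl fun c _ => by ring
      have B3 : (∑ ν, ∑ c, ∑ d, G c d * φv ν * (D c * D d * D ν)) = L * F := by
        rw [show (∑ ν, ∑ c, ∑ d, G c d * φv ν * (D c * D d * D ν))
            = ∑ c, ∑ d, ∑ ν, G c d * φv ν * (D c * D d * D ν) from sum3_rot _]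
        rw [hL, hF, Finset.sum_mul]
        refine Finset.sum_congr rfl fun c _ => ?_
        rw [Finset.sum_mul]
        refine Finset.sum_congr rfl fun d _ => ?_
        rw [Finset.mul_sum]
        exact Finset.sum_congr rfl fun ν _ => by ring
      rw [A1, A2, A3, B1, B2, B3]
      ring
    calc (∑ μ, ∑ ν, G μ ν * (DD μ * D ν))
        = ∑ μ, ∑ ν, (G μ ν * (F * D μ * D ν)
            - G μ ν * ((∑ c, ∑ d, W μ c d * D c * D d) * D ν)) := by
          refine Finset.sum_congr rfl fun μ _ => Finset.sum_congr rfl fun ν _ => ?_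
          rw [hgeo μ]; ring
      _ = (∑ μ, ∑ ν, G μ ν * (F * D μ * D ν))
          - ∑ μ, ∑ ν, G μ ν * ((∑ c, ∑ d, W μ c d * D c * D d) * D ν) := by
          simp only [Finset.sum_sub_distrib]
      _ = F * L - ((1/2) * S3 + F * L) := by
          rw [hQ]
          congr 1
          rw [hL, Finset.mul_sum]
          refine Finset.sum_congr rfl fun μ _ => ?_
          rw [Finset.mul_sum]
          exact Finset.sum_congr rfl fun ν _ => by ring
      _ = -((1/2) * S3) := by ring
  -- assemble
  have hE1 : (∑ μ, ∑ ν, (∑ α, P μ ν α * D α) * D μ * D ν) = S3 := by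
    rw [hS3]
    refine Finset.sum_congr rfl fun μ _ => Finset.sum_congr rfl fun ν _ => ?_
    rw [Finset.sum_mul, Finset.sum_mul]
    exact Finset.sum_congr rfl fun α _ => by ring
  have hE3 : (∑ μ, ∑ ν, G μ ν * (D μ * DD ν)) = ∑ μ, ∑ ν, G μ ν * (DD μ * D ν) := by
    rw [Finset.sum_comm]
    exact Finset.sum_congr rfl fun ν _ => Finset.sum_congr rfl fun μ _ => by
      rw [hsym μ ν]; ring
  calc (∑ μ, ∑ ν, ((∑ α, P μ ν α * D α) * D μ * D ν
        + G μ ν * (DD μ * D ν) + G μ ν * (D μ * DD ν)))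
      = (∑ μ, ∑ ν, (∑ α, P μ ν α * D α) * D μ * D ν)
        + (∑ μ, ∑ ν, G μ ν * (DD μ * D ν))
        + (∑ μ, ∑ ν, G μ ν * (D μ * DD ν)) := by
        simp only [Finset.sum_add_distrib]
    _ = S3 + -((1/2) * S3) + -((1/2) * S3) := by rw [hE1, hE3, hT]
    _ = 0 := by ring


end helpers

/-- Constancy of the length function g(γ̇, γ̇) along scale-covariant geodesics
of a Weylian metric gauge (g, φ). -/
theorem length_constant_along_scale_covariant_geodesic (n : ℕ)
    (U : Set (Euc n)) (hU : IsOpen U)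
    (g : Euc n → Matrix (Fin n) (Fin n) ℝ)
    (hgsym : ∀ y ∈ U, (g y)ᵀ = g y) (hginv : ∀ y ∈ U, IsUnit (g y))
    (hgdiff : ∀ μ ν : Fin n, ∀ y ∈ U, DifferentiableAt ℝ (fun z => g z μ ν) y)
    (φ : Fin n → Euc n → ℝ)
    (a b : ℝ) (γ : ℝ → Euc n)
    (hγU : ∀ t ∈ Set.Ioo a b, γ t ∈ U)
    (hγdiff : ∀ μ : Fin n, ∀ t ∈ Set.Ioo a b,
      DifferentiableAt ℝ (fun s => γ s μ) t ∧
      DifferentiableAt ℝ (deriv (fun s => γ s μ)) t)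
    (hgeo : ∀ t ∈ Set.Ioo a b, ∀ l : Fin n,
      deriv (deriv (fun s => γ s l)) t
        + (∑ μ, ∑ ν, weylConn g φ l μ ν (γ t)
            * deriv (fun s => γ s μ) t * deriv (fun s => γ s ν) t)
        - (∑ ν, φ ν (γ t) * deriv (fun s => γ s ν) t)
            * deriv (fun s => γ s l) t = 0) :
    ∀ t₁ ∈ Set.Ioo a b, ∀ t₂ ∈ Set.Ioo a b,
      (∑ μ, ∑ ν, g (γ t₁) μ ν * deriv (fun s => γ s μ) t₁
        * deriv (fun s => γ s ν) t₁)
      = (∑ μ, ∑ ν, g (γ t₂) μ ν * deriv (fun s => γ s μ) t₂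
        * deriv (fun s => γ s ν) t₂) := by
  set Lf : ℝ → ℝ := fun s => ∑ μ, ∑ ν, g (γ s) μ ν * deriv (fun s' => γ s' μ) s
      * deriv (fun s' => γ s' ν) s with hLf
  have key : ∀ t ∈ Set.Ioo a b, HasDerivAt Lf 0 t := by
    intro t ht
    have hyU := hγU t ht
    set G := g (γ t) with hG
    set Gi := (g (γ t))⁻¹ with hGi
    set D : Fin n → ℝ := fun μ => deriv (fun s => γ s μ) t with hD
    set DD : Fin n → ℝ := fun μ => deriv (deriv (fun s => γ s μ)) t with hDD
    set P : Fin n → Fin n → Fin n → ℝ :=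
      fun a' b' c' => pd (fun y => g y a' b') c' (γ t) with hP
    set φv : Fin n → ℝ := fun ν => φ ν (γ t) with hφv
    have hdγ : ∀ μ, DifferentiableAt ℝ (fun s => γ s μ) t := fun μ => (hγdiff μ t ht).1
    have hd1 : ∀ μ, HasDerivAt (deriv (fun s => γ s μ)) (DD μ) t :=
      fun μ => ((hγdiff μ t ht).2).hasDerivAt
    have hgc : ∀ μ ν, HasDerivAt (fun s => g (γ s) μ ν) (∑ α, P μ ν α * D α) t :=
      fun μ ν => hasDerivAt_comp_curve γ t _ (hgdiff μ ν _ hyU) hdγ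
    have hterm : ∀ μ ν, HasDerivAt
        (fun s => g (γ s) μ ν * deriv (fun s' => γ s' μ) s * deriv (fun s' => γ s' ν) s)
        (((∑ α, P μ ν α * D α) * D μ + G μ ν * DD μ) * D ν + G μ ν * D μ * DD ν) t :=
      fun μ ν => ((hgc μ ν).mul (hd1 μ)).mul (hd1 ν)
    have hsum : HasDerivAt Lf
        (∑ μ, ∑ ν, (((∑ α, P μ ν α * D α) * D μ + G μ ν * DD μ) * D ν
          + G μ ν * D μ * DD ν)) t := by
      rw [hLf]
      exact HasDerivAt.fun_sum fun μ _ => HasDerivAt.fun_sum fun ν _ => hterm μ ν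
    -- symmetry of g at γ t
    have hsym : ∀ i j, G i j = G j i := by
      intro i j
      have := hgsym (γ t) hyU
      exact ((congrFun (congrFun this j) i).symm.trans
        (by rw [Matrix.transpose_apply])).symm
    -- G * Gi = 1 contraction
    have hdelta : ∀ ν α, (∑ μ, G μ ν * Gi μ α) = if ν = α then (1:ℝ) else 0 := by
      intro ν α
      have hu : G * Gi = 1 :=
        Matrix.mul_nonsing_inv G ((Matrix.isUnit_iff_isUnit_det G).mp (hginv _ hyU))
      calc (∑ μ, G μ ν * Gi μ α) = ∑ μ, G ν μ * Gi μ α :=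
            Finset.sum_congr rfl fun μ _ => by rw [hsym μ ν]
        _ = (G * Gi) ν α := (Matrix.mul_apply).symm
        _ = (1 : Matrix (Fin n) (Fin n) ℝ) ν α := by rw [hu]
        _ = if ν = α then (1:ℝ) else 0 := Matrix.one_apply
    have hgeo' : ∀ l, DD l = (∑ ν, φv ν * D ν) * D l
        - ∑ μ, ∑ ν, ((1/2) * (∑ α, Gi l α * (P ν α μ + P α μ ν - P μ ν α))
            + (if l = μ then (1:ℝ) else 0) * φv ν + (if l = ν then (1:ℝ) else 0) * φv μ
            - G μ ν * ∑ α, Gi l α * φv α) * D μ * D ν := by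
      intro l
      have h := hgeo t ht l
      simp only [weylConn, christoffel, kron] at h
      rw [hDD, hD, hP, hφv, hG, hGi]
      linarith
    have hzero := key_algebra n G Gi hsym hdelta P D DD φv hgeo'
    have : (∑ μ, ∑ ν, (((∑ α, P μ ν α * D α) * D μ + G μ ν * DD μ) * D ν
          + G μ ν * D μ * DD ν))
        = (∑ μ, ∑ ν, ((∑ α, P μ ν α * D α) * D μ * D ν
          + G μ ν * (DD μ * D ν) + G μ ν * (D μ * DD ν))) :=
      Finset.sum_congr rfl fun μ _ => Finset.sum_congr rfl fun ν _ => by ring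
    rw [this, hzero] at hsum
    exact hsum
  -- constancy
  have main : ∀ t₁ ∈ Set.Ioo a b, ∀ t₂ ∈ Set.Ioo a b, t₁ ≤ t₂ → Lf t₂ = Lf t₁ := by
    intro t₁ h₁ t₂ h₂ hle
    have hsub : Set.Icc t₁ t₂ ⊆ Set.Ioo a b := fun x hx =>
      ⟨lt_of_lt_of_le h₁.1 hx.1, lt_of_le_of_lt hx.2 h₂.2⟩
    exact constant_of_has_deriv_right_zero
      (fun x hx => ((key x (hsub hx)).continuousAt).continuousWithinAt)
      (fun x hx => ((key x (hsub (Set.Ico_subset_Icc_self hx))).hasDerivWithinAt))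
      t₂ (Set.right_mem_Icc.mpr hle)
  intro t₁ h₁ t₂ h₂
  rcases le_total t₁ t₂ with h | h
  · exact (main t₁ h₁ t₂ h₂ h).symm
  · exact main t₂ h₂ t₁ h₁ h
end
end
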